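/- arXiv:2507.18629 — 2 statements merged into one kernel-verified Lean document; each statement's English description precedes it below -/
import Mathlib

section
/- For any c ≥ 1 and n ≥ 2, the number of spanning trees of K_n in which some vertex has degree at least n/(2c) is at most 2^n · n^{n − n/(2c)}. -/
open SimpleGraph

open scoped Classical

noncomputable def treeParent {V : Type*} (T : SimpleGraph V) (v u : V) : V :=
  if h : T.IsTree ∧ u ≠ v then (h.1.existsUnique_path u v).choose.getVert 1 else v

lemma treeParent_self {V : Type*} (T : SimpleGraph V) (v : V) : treeParent T v v = v := by
  simp [treeParent]

lemma adj_treeParent {V : Type*} {T : SimpleGraph V} (hT : T.IsTree) {v u : V} (h : u ≠ v) :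
    T.Adj u (treeParent T v u) := by
  rw [treeParent, dif_pos ⟨hT, h⟩]
  exact Walk.adj_snd (Walk.not_nil_of_ne h)

lemma treeParent_eq_of_adj {V : Type*} {T : SimpleGraph V} (hT : T.IsTree) {v u : V}
    (h : T.Adj u v) : treeParent T v u = v := by
  rw [treeParent, dif_pos ⟨hT, h.ne⟩]
  have hp : (Walk.cons h Walk.nil).IsPath := by simp [h.ne]
  rw [← (hT.existsUnique_path u v).choose_spec.2 _ hp]
  simp [Walk.getVert]

lemma adj_iff_treeParent {V : Type*} {T : SimpleGraph V} (hT : T.IsTree) (v a b : V) :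
    T.Adj a b ↔ (a ≠ v ∧ treeParent T v a = b) ∨ (b ≠ v ∧ treeParent T v b = a) := by
  constructor
  · intro hab
    by_cases ha : a = v
    · subst ha
      exact Or.inr ⟨hab.ne', treeParent_eq_of_adj hT hab.symm⟩
    by_cases hb : b = v
    · subst hb
      exact Or.inl ⟨ha, treeParent_eq_of_adj hT hab⟩
    set Q := (hT.existsUnique_path b v).choose with hQdef
    have hQ : Q.IsPath := (hT.existsUnique_path b v).choose_spec.1
    by_cases hmem : a ∈ Q.support
    · refine Or.inr ⟨hb, ?_⟩
      have ht : Q.takeUntil a hmem = Walk.cons hab.symm Walk.nil := by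
        have h1 : (Q.takeUntil a hmem).IsPath := hQ.takeUntil hmem
        have h2 : (Walk.cons hab.symm Walk.nil).IsPath := by simp [hab.ne']
        rw [(hT.existsUnique_path b a).choose_spec.2 _ h1,
          (hT.existsUnique_path b a).choose_spec.2 _ h2]
      have hs := Q.take_spec hmem
      rw [ht] at hs
      rw [treeParent, dif_pos ⟨hT, hb⟩, ← hQdef, ← hs]
      simp [Walk.getVert]
    · refine Or.inl ⟨ha, ?_⟩
      have hp : (Walk.cons hab Q).IsPath := hQ.cons hmem
      rw [treeParent, dif_pos ⟨hT, ha⟩, ← (hT.existsUnique_path a v).choose_spec.2 _ hp]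
      simp [Walk.getVert]
  · rintro (⟨ha, hP⟩ | ⟨hb, hP⟩)
    · exact hP ▸ adj_treeParent hT ha
    · exact (hP ▸ adj_treeParent hT hb).symm

noncomputable def pickS {α : Type*} (s : Finset α) (k : ℕ) : Finset α :=
  if h : k ≤ s.card then (Finset.exists_subset_card_eq h).choose else ∅

lemma pickS_subset {α : Type*} (s : Finset α) (k : ℕ) : pickS s k ⊆ s := by
  rw [pickS]
  split_ifs with h
  · exact (Finset.exists_subset_card_eq h).choose_spec.1
  · exact Finset.empty_subset s

lemma pickS_card {α : Type*} {s : Finset α} {k : ℕ} (h : k ≤ s.card) : (pickS s k).card = k := by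
  rw [pickS, dif_pos h]
  exact (Finset.exists_subset_card_eq h).choose_spec.2

noncomputable def encTree (n : ℕ) (npos : 0 < n) (c : ℝ) (k : ℕ)
    (T : {T : SimpleGraph (Fin n) // T.Connected ∧ T.IsAcyclic ∧
      ∃ v : Fin n, (n : ℝ) / (2 * c) ≤ T.degree v}) :
    Fin n × Finset (Fin n) × (Fin n → Fin n) :=
  (T.2.2.2.choose,
   pickS (Finset.univ.filter fun u => treeParent T.1 T.2.2.2.choose u = T.2.2.2.choose) k,
   fun u =>
     if u ∈ pickS (Finset.univ.filter fun u => treeParent T.1 T.2.2.2.choose u = T.2.2.2.choose) k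
     then ⟨0, npos⟩ else treeParent T.1 T.2.2.2.choose u)

open scoped Classical in
/-- For `c ≥ 1`, the number of spanning trees of `K_n` in which some vertex has degree
at least `n/(2c)` is at most `2^n · n^(n - n/(2c))`. -/
theorem count_star_like_trees (n : ℕ) (hn : 2 ≤ n) (c : ℝ) (hc : 1 ≤ c) :
    (Nat.card {T : SimpleGraph (Fin n) //
        T.Connected ∧ T.IsAcyclic ∧ ∃ v : Fin n, (n : ℝ) / (2 * c) ≤ T.degree v} : ℝ)
      ≤ 2 ^ n * (n : ℝ) ^ ((n : ℝ) - n / (2 * c)) := by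
  have npos : 0 < n := by omega
  set d : ℕ := ⌈(n : ℝ) / (2 * c)⌉₊ with hd
  have hn1 : (1 : ℝ) ≤ (n : ℝ) := by exact_mod_cast (by omega : 1 ≤ n)
  have hc2 : (2 : ℝ) ≤ 2 * c := by linarith
  have hdn : d + 1 ≤ n := by
    have h1 : (n : ℝ) / (2 * c) ≤ (n : ℝ) / 2 :=
      div_le_div_of_nonneg_left (by positivity) (by norm_num) hc2
    have h2 : (n : ℝ) / 2 ≤ ((n - 1 : ℕ) : ℝ) := by
      have h3 : (2 : ℝ) ≤ (n : ℝ) := by exact_mod_cast hn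
      rw [Nat.cast_sub (by omega : 1 ≤ n)]
      push_cast
      linarith
    have : d ≤ n - 1 := Nat.ceil_le.mpr (h1.trans h2)
    omega
  set k : ℕ := d + 1 with hk
  set E := encTree n npos c k with hE
  have hT : ∀ T : {T : SimpleGraph (Fin n) // T.Connected ∧ T.IsAcyclic ∧
      ∃ v : Fin n, (n : ℝ) / (2 * c) ≤ T.degree v}, T.1.IsTree := fun T => ⟨T.2.1, T.2.2.1⟩
  have hfil : ∀ T : {T : SimpleGraph (Fin n) // T.Connected ∧ T.IsAcyclic ∧
      ∃ v : Fin n, (n : ℝ) / (2 * c) ≤ T.degree v},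
      k ≤ (Finset.univ.filter fun u =>
        treeParent T.1 T.2.2.2.choose u = T.2.2.2.choose).card := by
    intro T
    set v := T.2.2.2.choose with hv
    have hdeg : d ≤ T.1.degree v := Nat.ceil_le.mpr T.2.2.2.choose_spec
    have hsub : insert v (T.1.neighborFinset v) ⊆
        Finset.univ.filter fun u => treeParent T.1 v u = v := by
      intro u hu
      simp only [Finset.mem_insert, mem_neighborFinset] at hu
      simp only [Finset.mem_filter, Finset.mem_univ, true_and]
      rcases hu with rfl | hadj
      · exact treeParent_self _ _
      · exact treeParent_eq_of_adj (hT T) hadj.symm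
    have hcard : (insert v (T.1.neighborFinset v)).card = T.1.degree v + 1 := by
      rw [Finset.card_insert_of_notMem (by simp), card_neighborFinset_eq_degree]
    calc k = d + 1 := hk
      _ ≤ T.1.degree v + 1 := by omega
      _ = (insert v (T.1.neighborFinset v)).card := hcard.symm
      _ ≤ _ := Finset.card_le_card hsub
  -- the target finset
  set F : Finset (Fin n × Finset (Fin n) × (Fin n → Fin n)) :=
    Finset.univ ×ˢ ((Finset.univ.powersetCard k).biUnion fun S =>
      {S} ×ˢ Fintype.piFinset fun u =>
        if u ∈ S then ({(⟨0, npos⟩ : Fin n)} : Finset (Fin n)) else Finset.univ) with hF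
  have hmem : ∀ T, E T ∈ F := by
    intro T
    rw [hF, hE]
    simp only [Finset.mem_product, Finset.mem_univ, true_and, Finset.mem_biUnion]
    refine ⟨pickS (Finset.univ.filter fun u =>
      treeParent T.1 T.2.2.2.choose u = T.2.2.2.choose) k, ?_, ?_⟩
    · rw [Finset.mem_powersetCard]
      exact ⟨Finset.subset_univ _, pickS_card (hfil T)⟩
    · refine ⟨Finset.mem_singleton_self _, ?_⟩
      rw [Fintype.mem_piFinset]
      intro u
      by_cases hu : u ∈ pickS (Finset.univ.filter fun u =>
          treeParent T.1 T.2.2.2.choose u = T.2.2.2.choose) k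
      · simp [encTree, hu]
      · simp [encTree, hu]
  have hinj : ∀ T1 T2, E T1 = E T2 → T1 = T2 := by
    intro T1 T2 heq
    rw [hE] at heq
    have hv : T1.2.2.2.choose = T2.2.2.2.choose := congrArg Prod.fst heq
    have hS : pickS (Finset.univ.filter fun u =>
          treeParent T1.1 T1.2.2.2.choose u = T1.2.2.2.choose) k =
        pickS (Finset.univ.filter fun u =>
          treeParent T2.1 T2.2.2.2.choose u = T2.2.2.2.choose) k :=
      congrArg (fun x => x.2.1) heq
    have hp := congrArg (fun x => x.2.2) heq
    have hP : ∀ u, treeParent T1.1 T1.2.2.2.choose u = treeParent T2.1 T2.2.2.2.choose u := by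
      intro u
      by_cases hu : u ∈ pickS (Finset.univ.filter fun u =>
          treeParent T1.1 T1.2.2.2.choose u = T1.2.2.2.choose) k
      · have h1 : treeParent T1.1 T1.2.2.2.choose u = T1.2.2.2.choose :=
          (Finset.mem_filter.mp (pickS_subset _ _ hu)).2
        have hu2 : u ∈ pickS (Finset.univ.filter fun u =>
            treeParent T2.1 T2.2.2.2.choose u = T2.2.2.2.choose) k := hS ▸ hu
        have h2 : treeParent T2.1 T2.2.2.2.choose u = T2.2.2.2.choose :=
          (Finset.mem_filter.mp (pickS_subset _ _ hu2)).2
        rw [h1, h2, hv]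
      · have hu2 : ¬ u ∈ pickS (Finset.univ.filter fun u =>
            treeParent T2.1 T2.2.2.2.choose u = T2.2.2.2.choose) k := fun h => hu (hS ▸ h)
        have h3 := congrFun hp u
        simp only [encTree] at h3
        rw [if_neg hu, if_neg hu2] at h3
        exact h3
    apply Subtype.ext
    ext a b
    rw [adj_iff_treeParent (hT T1) T1.2.2.2.choose a b,
      adj_iff_treeParent (hT T2) T2.2.2.2.choose a b, hP a, hP b, hv]
  have hcount : Nat.card {T : SimpleGraph (Fin n) // T.Connected ∧ T.IsAcyclic ∧
      ∃ v : Fin n, (n : ℝ) / (2 * c) ≤ T.degree v} ≤ F.card := by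
    rw [Nat.card_eq_fintype_card, ← Finset.card_univ]
    exact Finset.card_le_card_of_injOn E (fun T _ => hmem T) (fun a _ b _ h => hinj a b h)
  have hFcard : F.card ≤ n * (n.choose k * n ^ (n - k)) := by
    rw [hF, Finset.card_product, Finset.card_univ, Fintype.card_fin]
    refine Nat.mul_le_mul_left n ?_
    refine (Finset.card_biUnion_le).trans ?_
    have heach : ∀ S ∈ (Finset.univ : Finset (Fin n)).powersetCard k,
        ({S} ×ˢ Fintype.piFinset fun u =>
          if u ∈ S then ({(⟨0, npos⟩ : Fin n)} : Finset (Fin n)) else Finset.univ).card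
        = n ^ (n - k) := by
      intro S hS
      have hcS : S.card = k := (Finset.mem_powersetCard.mp hS).2
      rw [Finset.card_product, Finset.card_singleton, one_mul, Fintype.card_piFinset]
      have : ∀ u : Fin n, (if u ∈ S then ({(⟨0, npos⟩ : Fin n)} : Finset (Fin n))
          else Finset.univ).card = if u ∈ S then 1 else n := by
        intro u
        split_ifs <;> simp
      rw [Finset.prod_congr rfl fun u _ => this u, Finset.prod_ite, Finset.prod_const,
        Finset.prod_const, one_pow, one_mul]
      congr 1
      have : Finset.univ.filter (fun u : Fin n => ¬ u ∈ S) = Sᶜ := by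
        ext u; simp
      rw [this, Finset.card_compl, Fintype.card_fin, hcS]
    rw [Finset.sum_congr rfl heach, Finset.sum_const, Finset.card_powersetCard,
      Finset.card_univ, Fintype.card_fin, smul_eq_mul]
  have hchoose : n.choose k ≤ 2 ^ n := by
    calc n.choose k ≤ ∑ m ∈ Finset.range (n + 1), n.choose m :=
          Finset.single_le_sum (fun m _ => Nat.zero_le _)
            (Finset.mem_range.mpr (by omega))
      _ = 2 ^ n := Nat.sum_range_choose n
  have hnat : n * (n.choose k * n ^ (n - k)) ≤ 2 ^ n * n ^ (n - d) := by
    have h1 : n * (n.choose k * n ^ (n - k)) = n.choose k * n ^ (n - k + 1) := by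
      rw [pow_succ]; ring
    have h2 : n - k + 1 = n - d := by omega
    rw [h1, h2]
    exact Nat.mul_le_mul_right _ hchoose
  calc (Nat.card {T : SimpleGraph (Fin n) // T.Connected ∧ T.IsAcyclic ∧
      ∃ v : Fin n, (n : ℝ) / (2 * c) ≤ T.degree v} : ℝ)
      ≤ ((2 ^ n * n ^ (n - d) : ℕ) : ℝ) := by
        exact_mod_cast hcount.trans (hFcard.trans hnat)
    _ = 2 ^ n * (n : ℝ) ^ ((n : ℝ) - d) := by
        push_cast
        rw [← Real.rpow_natCast (n : ℝ) (n - d), Nat.cast_sub (by omega : d ≤ n)]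
    _ ≤ 2 ^ n * (n : ℝ) ^ ((n : ℝ) - n / (2 * c)) := by
        have := Real.rpow_le_rpow_of_exponent_le hn1
          (sub_le_sub_left (Nat.le_ceil ((n : ℝ) / (2 * c))) (n : ℝ))
        have h2 : (0 : ℝ) ≤ 2 ^ n := by positivity
        exact mul_le_mul_of_nonneg_left this h2
end

section
/- For n ≥ 1000 and t ≤ n/100: if F is a union of t pairwise vertex-disjoint edges in K_n and T_0 is a forest in K_n such that no edge of T_0 is adjacent to more than n/12 other edges of T_0 (T_0 is not 12-star-like), then the number of spanning trees of K_n that contain F and contain no edge of T_0 \ F is at least 0.01 times the number of spanning trees of K_n containing F. -/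
open SimpleGraph

open Finset

variable {V : Type*}

lemma adj_sdiff_single {G : SimpleGraph V} {e : Sym2 V} {x y : V} :
    (G \ fromEdgeSet {e}).Adj x y ↔ G.Adj x y ∧ s(x,y) ≠ e := by
  simp only [sdiff_adj, fromEdgeSet_adj, Set.mem_singleton_iff]
  constructor
  · rintro ⟨h, h2⟩; exact ⟨h, fun he => h2 ⟨he, h.ne⟩⟩
  · rintro ⟨h, h2⟩; exact ⟨h, fun he => h2 he.1⟩

lemma reach_endpoint {G : SimpleGraph V} {u v : V} {x w : V}
    (p : G.Walk x w) :
    (G \ fromEdgeSet {s(u,v)}).Reachable x w ∨ (G \ fromEdgeSet {s(u,v)}).Reachable u w ∨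
      (G \ fromEdgeSet {s(u,v)}).Reachable v w := by
  induction p with
  | nil => exact Or.inl (Reachable.refl _)
  | @cons a b c h q ih =>
    rcases ih with hr | hr | hr
    · by_cases he : s(a,b) = s(u,v)
      · rw [Sym2.eq_iff] at he
        rcases he with ⟨rfl, rfl⟩ | ⟨rfl, rfl⟩
        · exact Or.inr (Or.inr hr)
        · exact Or.inr (Or.inl hr)
      · exact Or.inl ((Adj.reachable (adj_sdiff_single.mpr ⟨h, he⟩)).trans hr)
    · exact Or.inr (Or.inl hr)
    · exact Or.inr (Or.inr hr)

lemma reach_of_conn {G : SimpleGraph V} {u v : V} (hconn : G.Connected) (w : V) :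
    (G \ fromEdgeSet {s(u,v)}).Reachable u w ∨ (G \ fromEdgeSet {s(u,v)}).Reachable v w := by
  obtain ⟨p⟩ := hconn.preconnected u w
  rcases reach_endpoint (u := u) (v := v) p with h | h | h
  · exact Or.inl h
  · exact Or.inl h
  · exact Or.inr h

lemma not_reach_sdiff {G : SimpleGraph V} {u v : V} (hac : G.IsAcyclic) (h : G.Adj u v) :
    ¬ (G \ fromEdgeSet {s(u,v)}).Reachable u v :=
  (isBridge_iff.mp ((isAcyclic_iff_forall_adj_isBridge.mp hac) h))

lemma isAcyclic_of_le {G H : SimpleGraph V} (hac : G.IsAcyclic) (hle : H ≤ G) : H.IsAcyclic := by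
  intro x c hc
  have hsub : ∀ e ∈ c.edges, e ∈ G.edgeSet := fun e hce =>
    (edgeSet_subset_edgeSet.mpr hle) (c.edges_subset_edgeSet hce)
  exact hac (c.transfer G hsub) (hc.transfer hsub)

lemma isAcyclic_sup_edge {G : SimpleGraph V} {a b : V} (hac : G.IsAcyclic)
    (hab : a ≠ b) (hreach : ¬ G.Reachable a b) :
    (G ⊔ fromEdgeSet {s(a,b)}).IsAcyclic := by
  have hGeq : (G ⊔ fromEdgeSet {s(a,b)}) \ fromEdgeSet {s(a,b)} ≤ G := by
    intro x y hxy
    rw [adj_sdiff_single] at hxy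
    rcases hxy with ⟨hxy | hxy, hne⟩
    · exact hxy
    · rw [fromEdgeSet_adj, Set.mem_singleton_iff] at hxy
      exact absurd hxy.1 hne
  have hbridge : (G ⊔ fromEdgeSet {s(a,b)}).IsBridge s(a,b) := by
    rw [isBridge_iff]
    intro hr
    exact hreach (hr.mono hGeq)
  intro x c hc
  by_cases he : s(a,b) ∈ c.edges
  · exact hbridge.notMem_edges_of_isCycle hc he
  · have hsub : ∀ e ∈ c.edges, e ∈ G.edgeSet := by
      intro e hce
      have h1 := c.edges_subset_edgeSet hce
      rw [edgeSet_sup, edgeSet_fromEdgeSet] at h1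
      rcases h1 with h1 | h1
      · exact h1
      · exact absurd (h1.1 : e ∈ ({s(a,b)} : Set (Sym2 V))) (by
          intro hh
          exact he (by rwa [Set.mem_singleton_iff] at hh ▸ hce))
    exact hac (c.transfer G hsub) (hc.transfer hsub)

lemma connected_patch {H : SimpleGraph V} [Nonempty V] {u v w₀ : V}
    (hall : ∀ w, H.Reachable u w ∨ H.Reachable v w) (hw : H.Reachable v w₀) (hwu : w₀ ≠ u) :
    (H ⊔ fromEdgeSet {s(u,w₀)}).Connected := by
  have hmono : H ≤ H ⊔ fromEdgeSet {s(u,w₀)} := le_sup_left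
  have hadj : (H ⊔ fromEdgeSet {s(u,w₀)}).Adj u w₀ :=
    Or.inr (by rw [fromEdgeSet_adj]; exact ⟨rfl, hwu.symm⟩)
  have key : ∀ w, (H ⊔ fromEdgeSet {s(u,w₀)}).Reachable u w := by
    intro w
    rcases hall w with h | h
    · exact h.mono hmono
    · exact (hadj.reachable.trans ((hw.mono hmono).symm.trans (h.mono hmono)))
  rw [connected_iff]
  exact ⟨fun x y => (key x).symm.trans (key y), inferInstance⟩

lemma swap_adj {T : SimpleGraph V} {e f : Sym2 V} {x y : V} :
    (((T \ fromEdgeSet {e}) ⊔ fromEdgeSet {f}).Adj x y) ↔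
      ((T.Adj x y ∧ s(x,y) ≠ e) ∨ (s(x,y) = f ∧ x ≠ y)) := by
  rw [sup_adj, adj_sdiff_single, fromEdgeSet_adj, Set.mem_singleton_iff]

lemma swap_delete_eq {T : SimpleGraph V} {e f : Sym2 V} (hf : f ∉ T.edgeSet) :
    ((T \ fromEdgeSet {e}) ⊔ fromEdgeSet {f}) \ fromEdgeSet {f} = T \ fromEdgeSet {e} := by
  ext x y
  rw [adj_sdiff_single, swap_adj, adj_sdiff_single]
  constructor
  · rintro ⟨h | ⟨h1, _⟩, h2⟩
    · exact h
    · exact absurd h1 h2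
  · intro h
    refine ⟨Or.inl h, ?_⟩
    intro hxy
    exact hf (hxy ▸ (T.mem_edgeSet.mpr h.1))

lemma swap_recover {T : SimpleGraph V} {e f : Sym2 V} (hf : f ∉ T.edgeSet) (he : e ∈ T.edgeSet) :
    ((((T \ fromEdgeSet {e}) ⊔ fromEdgeSet {f}) \ fromEdgeSet {f}) ⊔ fromEdgeSet {e}) = T := by
  rw [swap_delete_eq hf]
  ext x y
  rw [sup_adj, adj_sdiff_single, fromEdgeSet_adj, Set.mem_singleton_iff]
  constructor
  · rintro (⟨h, _⟩ | ⟨h1, _⟩)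
    · exact h
    · exact T.mem_edgeSet.mp (h1 ▸ he)
  · intro h
    by_cases hxy : s(x,y) = e
    · exact Or.inr ⟨hxy, h.ne⟩
    · exact Or.inl ⟨h, hxy⟩

lemma swap_edgeSet {T : SimpleGraph V} {e : Sym2 V} {u w : V} (huw : u ≠ w) :
    ((T \ fromEdgeSet {e}) ⊔ fromEdgeSet {s(u,w)}).edgeSet
      = (T.edgeSet \ {e}) ∪ {s(u,w)} := by
  ext a
  induction a using Sym2.ind with
  | _ x y =>
    rw [Set.mem_union, Set.mem_diff, Set.mem_singleton_iff, Set.mem_singleton_iff,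
      mem_edgeSet, swap_adj, mem_edgeSet]
    constructor
    · rintro (⟨h, h2⟩ | ⟨h1, _⟩)
      · exact Or.inl ⟨h, h2⟩
      · exact Or.inr h1
    · rintro (⟨h, h2⟩ | h1)
      · exact Or.inl ⟨h, h2⟩
      · refine Or.inr ⟨h1, ?_⟩
        intro hd
        rcases Sym2.eq_iff.mp h1 with ⟨hx, hy⟩ | ⟨hx, hy⟩
        · exact huw (hx ▸ hy ▸ hd)
        · exact huw (hy ▸ hx ▸ hd.symm)

/-- after swapping edge s(u,v) for s(u,w) (w on the v-side), the graph is again a tree -/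
lemma swap_tree {T : SimpleGraph V} {u v w : V} (hconn : T.Connected) (hac : T.IsAcyclic)
    (he : T.Adj u v) (hwu : w ≠ u)
    (hside : (T \ fromEdgeSet {s(u,v)}).Reachable v w) :
    ((T \ fromEdgeSet {s(u,v)}) ⊔ fromEdgeSet {s(u,w)}).Connected ∧
    ((T \ fromEdgeSet {s(u,v)}) ⊔ fromEdgeSet {s(u,w)}).IsAcyclic := by
  have hne : Nonempty V := ⟨u⟩
  have hacH : (T \ fromEdgeSet {s(u,v)}).IsAcyclic := isAcyclic_of_le hac sdiff_le
  have hnr : ¬ (T \ fromEdgeSet {s(u,v)}).Reachable u w := by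
    intro hr
    exact not_reach_sdiff hac he (hr.trans hside.symm)
  constructor
  · exact connected_patch (reach_of_conn hconn) hside hwu
  · exact isAcyclic_sup_edge hacH hwu.symm hnr

lemma eq_first_edge {G : SimpleGraph V} {u v : V} {p : G.Walk u v} (hp : p.IsPath)
    {f₁ f₂ : Sym2 V}
    (h1 : f₁ ∈ p.edges) (hu1 : u ∈ f₁) (h2 : f₂ ∈ p.edges) (hu2 : u ∈ f₂) : f₁ = f₂ := by
  cases p with
  | nil => simp at h1
  | @cons _ b _ h q =>
    have hq : ∀ f : Sym2 V, f ∈ q.edges → u ∈ f → False := by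
      intro f hf haf
      induction f using Sym2.ind with
      | _ x y =>
        rcases Sym2.mem_iff.mp haf with rfl | rfl
        · exact ((Walk.cons_isPath_iff _ _).mp hp).2 (q.fst_mem_support_of_mem_edges hf)
        · exact ((Walk.cons_isPath_iff _ _).mp hp).2 (q.snd_mem_support_of_mem_edges hf)
    rw [Walk.edges_cons, List.mem_cons] at h1 h2
    rcases h1 with rfl | h1
    · rcases h2 with rfl | h2
      · rfl
      · exact absurd hu2 (fun hu2 => hq _ h2 hu2)
    · exact absurd hu1 (fun hu1 => hq _ h1 hu1)

lemma unique_cut_nbr [DecidableEq V] {T : SimpleGraph V} (hconn : T.Connected)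
    {u v : V} {w₁ w₂ : V}
    (h1 : s(u,w₁) ∈ T.edgeSet) (hr1 : ¬ (T \ fromEdgeSet {s(u,w₁)}).Reachable u v)
    (h2 : s(u,w₂) ∈ T.edgeSet) (hr2 : ¬ (T \ fromEdgeSet {s(u,w₂)}).Reachable u v) :
    w₁ = w₂ := by
  obtain ⟨p₀⟩ := hconn.preconnected u v
  set p : T.Path u v := p₀.toPath with hpdef
  have hmem : ∀ w : V, s(u,w) ∈ T.edgeSet → ¬ (T \ fromEdgeSet {s(u,w)}).Reachable u v →
      s(u,w) ∈ (p : T.Walk u v).edges := by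
    intro w hw hr
    by_contra hne
    apply hr
    refine ⟨(p : T.Walk u v).transfer _ (fun e he' => ?_)⟩
    rw [edgeSet_sdiff, edgeSet_fromEdgeSet]
    refine ⟨(p : T.Walk u v).edges_subset_edgeSet he', ?_⟩
    intro hmem2
    rw [Set.mem_diff, Set.mem_singleton_iff] at hmem2
    exact hne (hmem2.1 ▸ he')
  have := eq_first_edge p.prop (hmem _ h1 hr1) (Sym2.mem_mk_left _ _)
    (hmem _ h2 hr2) (Sym2.mem_mk_left _ _)
  exact Sym2.congr_right.mp this

lemma dist_lt_of_mem_support [DecidableEq V] {G : SimpleGraph V} {r a x : V} (p : G.Walk r a)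
    (hlen : p.length = G.dist r a) (hx : x ∈ p.support) (hxa : x ≠ a) :
    G.dist r x < G.dist r a := by
  have h1 : G.dist r x ≤ (p.takeUntil x hx).length := G.dist_le _
  have h2 := congrArg Walk.length (p.take_spec hx)
  rw [Walk.length_append] at h2
  have h3 : (p.dropUntil x hx).length ≠ 0 := fun h0 => hxa (Walk.eq_of_length_eq_zero h0)
  omega

lemma IsPath.concat' {G : SimpleGraph V} {a b r : V} {p : G.Walk r a} (hp : p.IsPath)
    (h : G.Adj a b) (hb : b ∉ p.support) : (p.concat h).IsPath := by
  rw [← Walk.isPath_reverse_iff, Walk.reverse_concat, Walk.cons_isPath_iff]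
  exact ⟨hp.reverse, by rwa [Walk.support_reverse, List.mem_reverse]⟩

lemma dist_ne_of_adj_acyclic [DecidableEq V] {G : SimpleGraph V} (hac : G.IsAcyclic) {a b r : V}
    (hadj : G.Adj a b) (hra : G.Reachable r a) (hrb : G.Reachable r b) :
    G.dist r a ≠ G.dist r b := by
  intro heq
  obtain ⟨p, hp, hpl⟩ := hra.exists_path_of_dist
  obtain ⟨q, hq, hql⟩ := hrb.exists_path_of_dist
  have hab : a ≠ b := hadj.ne
  have hbp : b ∉ p.support := by
    intro hb
    have := dist_lt_of_mem_support p hpl hb (fun h => hab h.symm)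
    omega
  have hq' : (p.concat hadj).IsPath := IsPath.concat' hp hadj hbp
  have hune := hac.path_unique ⟨q, hq⟩ ⟨p.concat hadj, hq'⟩
  have hlen := congrArg (fun z : G.Path r b => (z : G.Walk r b).length) hune
  simp only [Walk.length_concat] at hlen
  omega

lemma forest_card_edge_le [Fintype V] [LinearOrder V] [Nonempty V] {G : SimpleGraph V}
    [DecidableRel G.Adj] (hac : G.IsAcyclic) :
    G.edgeFinset.card + 1 ≤ Fintype.card V := by
  classical
  set r : V → V := fun x => (G.connectedComponentMk x).out with hr
  have hreach : ∀ x, G.Reachable (r x) x := fun x => ConnectedComponent.eq.mp (Quot.out_eq _)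
  have hradj : ∀ {a b : V}, G.Reachable a b → r a = r b := by
    intro a b h
    have h2 : G.connectedComponentMk a = G.connectedComponentMk b := ConnectedComponent.eq.mpr h
    rw [hr]
    simp only [h2]
  set d : V → ℕ := fun x => G.dist (r x) x with hd
  have hkey : ∀ {a b : V}, G.Adj a b → d a ≠ d b := by
    intro a b hadj
    have h1 := hradj hadj.reachable
    show G.dist (r a) a ≠ G.dist (r b) b
    rw [h1]
    exact dist_ne_of_adj_acyclic hac hadj (h1 ▸ hreach a) (hreach b)
  set ρ : Sym2 V → V := Sym2.lift ⟨fun a b => if d a < d b then b else if d b < d a then a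
      else max a b, by
    intro a b
    dsimp only
    rcases lt_trichotomy (d a) (d b) with h | h | h
    · rw [if_pos h, if_neg (by omega : ¬ d b < d a), if_pos h]
    · rw [if_neg (by omega : ¬ d a < d b), if_neg (by omega : ¬ d b < d a),
        if_neg (by omega : ¬ d b < d a), if_neg (by omega : ¬ d a < d b), max_comm]
    · rw [if_neg (by omega : ¬ d a < d b), if_pos h, if_pos h]⟩ with hρ
  have hspec : ∀ {a b : V}, G.Adj a b → ∃ x y, s(a,b) = s(y,x) ∧ ρ s(a,b) = x ∧ d y < d x := by
    intro a b hadj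
    have hne := hkey hadj
    rcases lt_or_gt_of_ne hne with h | h
    · exact ⟨b, a, rfl, by rw [hρ]; simp only [Sym2.lift_mk]; rw [if_pos h], h⟩
    · refine ⟨a, b, Sym2.eq_swap, ?_, h⟩
      rw [hρ]
      simp only [Sym2.lift_mk]
      rw [if_neg (by omega : ¬ d a < d b), if_pos h]
  have x₀ : V := Classical.arbitrary V
  have hd0 : d (r x₀) = 0 := by
    have h2 : r (r x₀) = r x₀ := hradj (hreach x₀)
    show G.dist (r (r x₀)) (r x₀) = 0
    rw [h2]
    exact G.dist_self
  have hmaps : ∀ e ∈ G.edgeFinset, ρ e ∈ univ.erase (r x₀) := by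
    intro e he
    induction e using Sym2.ind with
    | _ a b =>
      have hadj : G.Adj a b := by rwa [mem_edgeFinset, mem_edgeSet] at he
      obtain ⟨x, y, -, hρe, hlt⟩ := hspec hadj
      rw [hρe]
      refine mem_erase.mpr ⟨?_, mem_univ _⟩
      intro hxr
      rw [hxr, hd0] at hlt
      omega
  have hinj : Set.InjOn ρ G.edgeFinset := by
    rintro e₁ he₁ e₂ he₂ hρeq
    simp only [coe_edgeFinset] at he₁ he₂
    induction e₁ using Sym2.ind with
    | _ a₁ b₁ =>
      induction e₂ using Sym2.ind with
      | _ a₂ b₂ =>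
        have hadj₁ : G.Adj a₁ b₁ := (G.mem_edgeSet).mp he₁
        have hadj₂ : G.Adj a₂ b₂ := (G.mem_edgeSet).mp he₂
        obtain ⟨x₁, y₁, hes₁, hρ₁, hlt₁⟩ := hspec hadj₁
        obtain ⟨x₂, y₂, hes₂, hρ₂, hlt₂⟩ := hspec hadj₂
        rw [hes₁, hes₂]
        rw [hρ₁, hρ₂] at hρeq
        subst hρeq
        have hadjy₁ : G.Adj y₁ x₁ := (G.mem_edgeSet).mp (hes₁ ▸ he₁)
        have hadjy₂ : G.Adj y₂ x₁ := (G.mem_edgeSet).mp (hes₂ ▸ he₂)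
        have hry₁ : r y₁ = r x₁ := hradj hadjy₁.reachable
        have hry₂ : r y₂ = r x₁ := hradj hadjy₂.reachable
        have hr1 : G.Reachable (r x₁) y₁ := hry₁ ▸ hreach y₁
        have hr2 : G.Reachable (r x₁) y₂ := hry₂ ▸ hreach y₂
        obtain ⟨p₁, hp₁, hpl₁⟩ := hr1.exists_path_of_dist
        obtain ⟨p₂, hp₂, hpl₂⟩ := hr2.exists_path_of_dist
        have hdy₁ : G.dist (r x₁) y₁ = d y₁ := by rw [← hry₁]
        have hdy₂ : G.dist (r x₁) y₂ = d y₂ := by rw [← hry₂]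
        have hdx₁ : G.dist (r x₁) x₁ = d x₁ := rfl
        have hx₁ : x₁ ∉ p₁.support := by
          intro hx
          rcases eq_or_ne x₁ y₁ with hxy | hxy
          · rw [hxy] at hlt₁; exact absurd hlt₁ (lt_irrefl _)
          · have hlt := dist_lt_of_mem_support p₁ hpl₁ hx hxy
            omega
        have hx₂ : x₁ ∉ p₂.support := by
          intro hx
          rcases eq_or_ne x₁ y₂ with hxy | hxy
          · rw [hxy] at hlt₂; exact absurd hlt₂ (lt_irrefl _)
          · have hlt := dist_lt_of_mem_support p₂ hpl₂ hx hxy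
            omega
        have hq₁ : (p₁.concat hadjy₁).IsPath := IsPath.concat' hp₁ hadjy₁ hx₁
        have hq₂ : (p₂.concat hadjy₂).IsPath := IsPath.concat' hp₂ hadjy₂ hx₂
        have hune := hac.path_unique ⟨p₁.concat hadjy₁, hq₁⟩ ⟨p₂.concat hadjy₂, hq₂⟩
        have hwalk : p₁.concat hadjy₁ = p₂.concat hadjy₂ := congrArg Subtype.val hune
        obtain ⟨hv, -⟩ := Walk.concat_inj hwalk
        rw [hv]
  have hcard := Finset.card_le_card_of_injOn ρ hmaps hinj
  rw [Finset.card_erase_of_mem (mem_univ _), Finset.card_univ] at hcard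
  have hpos : 0 < Fintype.card V := Fintype.card_pos
  omega

variable [Fintype V] [DecidableEq V]

open scoped Classical in
lemma step_count (F T₀ : SimpleGraph V) (u v : V) (huv : u ≠ v)
    (heF : s(u,v) ∉ F.edgeSet) (P : Finset (Sym2 V)) :
    (univ.filter (fun T : SimpleGraph V =>
        (F ≤ T ∧ T.Connected ∧ T.IsAcyclic ∧ ∀ d ∈ P, d ∉ T.edgeSet) ∧ s(u,v) ∈ T.edgeSet)).card
      * (univ.filter (fun w : V => w ≠ u ∧ w ≠ v ∧ s(u,w) ∉ P ∧ s(v,w) ∉ P)).card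
    ≤ 2 * (univ.filter (fun T : SimpleGraph V =>
        F ≤ T ∧ T.Connected ∧ T.IsAcyclic ∧ ∀ d ∈ insert s(u,v) P, d ∉ T.edgeSet)).card := by
  classical
  set e : Sym2 V := s(u,v) with hedef
  set X := univ.filter (fun T : SimpleGraph V =>
      (F ≤ T ∧ T.Connected ∧ T.IsAcyclic ∧ ∀ d ∈ P, d ∉ T.edgeSet) ∧ e ∈ T.edgeSet) with hX
  set W := univ.filter (fun w : V => w ≠ u ∧ w ≠ v ∧ s(u,w) ∉ P ∧ s(v,w) ∉ P) with hW
  set Y := univ.filter (fun T : SimpleGraph V =>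
      F ≤ T ∧ T.Connected ∧ T.IsAcyclic ∧ ∀ d ∈ insert e P, d ∉ T.edgeSet) with hY
  set φ : SimpleGraph V × V → SimpleGraph V := fun p =>
    (p.1 \ fromEdgeSet {e}) ⊔ fromEdgeSet
      {if (p.1 \ fromEdgeSet {e}).Reachable v p.2 then s(u, p.2) else s(v, p.2)} with hφ
  -- basic facts about members of X ×ˢ W
  have hmem : ∀ p ∈ X ×ˢ W, φ p ∈ Y ∧
      ((p.1 \ fromEdgeSet {e}).Reachable v p.2 →
        (φ p = (p.1 \ fromEdgeSet {e}) ⊔ fromEdgeSet {s(u, p.2)}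
          ∧ s(u, p.2) ∉ p.1.edgeSet)) ∧
      (¬ (p.1 \ fromEdgeSet {e}).Reachable v p.2 →
        (φ p = (p.1 \ fromEdgeSet {e}) ⊔ fromEdgeSet {s(v, p.2)}
          ∧ s(v, p.2) ∉ p.1.edgeSet)) := by
    rintro ⟨T, w⟩ hp
    rw [mem_product, hX, hW, mem_filter, mem_filter] at hp
    obtain ⟨⟨-, ⟨hF, hconn, hac, havoid⟩, heT⟩, -, hwu, hwv, huwP, hvwP⟩ := hp
    have hadj : T.Adj u v := T.mem_edgeSet.mp heT
    have hFle : ∀ f : Sym2 V, F ≤ (T \ fromEdgeSet {e}) ⊔ fromEdgeSet {f} := by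
      intro f x y hxy
      refine Or.inl (adj_sdiff_single.mpr ⟨hF hxy, ?_⟩)
      intro hh
      exact heF (hh ▸ F.mem_edgeSet.mpr hxy)
    by_cases hside : (T \ fromEdgeSet {e}).Reachable v w
    · have hφeq : φ (T, w) = (T \ fromEdgeSet {e}) ⊔ fromEdgeSet {s(u, w)} := by
        simp only [hφ, if_pos hside]
      have hfT : s(u, w) ∉ T.edgeSet := by
        intro hmem2
        have hne2 : s(u,w) ≠ e := by
          intro hh
          exact hwv (Sym2.congr_right.mp (hedef ▸ hh))
        have : (T \ fromEdgeSet {e}).Adj u w :=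
          adj_sdiff_single.mpr ⟨T.mem_edgeSet.mp hmem2, hne2⟩
        exact not_reach_sdiff hac hadj (this.reachable.trans hside.symm)
      have htree := swap_tree hconn hac hadj hwu hside
      have hYmem : φ (T, w) ∈ Y := by
        rw [hY, mem_filter, hφeq]
        refine ⟨mem_univ _, hFle _, htree.1, htree.2, ?_⟩
        intro d hd
        rw [swap_edgeSet (fun hh => hwu (hh ▸ rfl) : u ≠ w)]
        rcases Finset.mem_insert.mp hd with rfl | hdP
        · rintro (⟨-, hd2⟩ | hd2)
          · exact hd2 rfl
          · rw [Set.mem_singleton_iff] at hd2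
            exact hwv (Sym2.congr_right.mp (hedef ▸ hd2)).symm
        · rintro (⟨hd2, -⟩ | hd2)
          · exact havoid d hdP hd2
          · rw [Set.mem_singleton_iff] at hd2
            exact huwP (hd2 ▸ hdP)
      exact ⟨hYmem, fun _ => ⟨hφeq, hfT⟩, fun hns => absurd hside hns⟩
    · have hreach : (T \ fromEdgeSet {e}).Reachable u w := by
        rcases reach_of_conn (u := u) (v := v) hconn w with h | h
        · exact h
        · exact absurd h hside
      have hφeq : φ (T, w) = (T \ fromEdgeSet {e}) ⊔ fromEdgeSet {s(v, w)} := by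
        simp only [hφ, if_neg hside]
      have hfT : s(v, w) ∉ T.edgeSet := by
        intro hmem2
        have hne2 : s(v,w) ≠ e := by
          intro hh
          rw [hedef] at hh
          have : s(w,v) = s(u,v) := by rw [Sym2.eq_swap]; exact hh
          exact hwu (Sym2.congr_left.mp this)
        have : (T \ fromEdgeSet {e}).Adj v w :=
          adj_sdiff_single.mpr ⟨T.mem_edgeSet.mp hmem2, hne2⟩
        exact not_reach_sdiff hac hadj ((hreach.trans this.reachable.symm).symm).symm
      have htree : ((T \ fromEdgeSet {e}) ⊔ fromEdgeSet {s(v, w)}).Connected ∧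
          ((T \ fromEdgeSet {e}) ⊔ fromEdgeSet {s(v, w)}).IsAcyclic := by
        have h2 : e = s(v,u) := by rw [hedef, Sym2.eq_swap]
        rw [h2] at hreach ⊢
        exact swap_tree hconn hac hadj.symm hwv hreach
      have hYmem : φ (T, w) ∈ Y := by
        rw [hY, mem_filter, hφeq]
        refine ⟨mem_univ _, hFle _, htree.1, htree.2, ?_⟩
        intro d hd
        rw [swap_edgeSet (fun hh => hwv (hh ▸ rfl) : v ≠ w)]
        rcases Finset.mem_insert.mp hd with rfl | hdP
        · rintro (⟨-, hd2⟩ | hd2)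
          · exact hd2 rfl
          · rw [Set.mem_singleton_iff] at hd2
            rw [hedef] at hd2
            have h3 : s(v,u) = s(v,w) := by rw [← Sym2.eq_swap]; exact hd2
            exact hwu (Sym2.congr_right.mp h3).symm
        · rintro (⟨hd2, -⟩ | hd2)
          · exact havoid d hdP hd2
          · rw [Set.mem_singleton_iff] at hd2
            exact hvwP (hd2 ▸ hdP)
      exact ⟨hYmem, fun hs => absurd hs hside, fun _ => ⟨hφeq, hfT⟩⟩
  have hcard : (X ×ˢ W).card ≤ 2 * Y.card := by
    apply Finset.card_le_mul_card_image_of_maps_to (f := φ) (fun p hp => (hmem p hp).1)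
    intro T' hT'
    rw [hY, mem_filter] at hT'
    obtain ⟨-, hF', hconn', hac', havoid'⟩ := hT'
    -- fibers have at most 2 elements, via injection into Bool
    have : ((X ×ˢ W).filter (fun p => φ p = T')) ⊆
        ((X ×ˢ W).filter (fun p => φ p = T')) := subset_rfl
    apply le_trans (Finset.card_le_card_of_injOn
      (fun p => if (p.1 \ fromEdgeSet {e}).Reachable v p.2 then true else false)
      (fun p _ => mem_univ _) ?_) (by simp)
    rintro ⟨T₁, w₁⟩ hp1 ⟨T₂, w₂⟩ hp2 hbeq
    simp only [Finset.coe_filter, Set.mem_setOf_eq] at hp1 hp2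
    obtain ⟨hp1S, hp1φ⟩ := hp1
    obtain ⟨hp2S, hp2φ⟩ := hp2
    obtain ⟨-, h1side, h1nside⟩ := hmem _ hp1S
    obtain ⟨-, h2side, h2nside⟩ := hmem _ hp2S
    have hX1 := (Finset.mem_product.mp hp1S).1
    have hX2 := (Finset.mem_product.mp hp2S).1
    rw [hX, mem_filter] at hX1 hX2
    obtain ⟨-, ⟨-, hconn1, hac1, -⟩, heT1⟩ := hX1
    obtain ⟨-, ⟨-, hconn2, hac2, -⟩, heT2⟩ := hX2
    have hadj1 : T₁.Adj u v := T₁.mem_edgeSet.mp heT1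
    have hadj2 : T₂.Adj u v := T₂.mem_edgeSet.mp heT2
    by_cases hs1 : (T₁ \ fromEdgeSet {e}).Reachable v w₁
    · have hs2 : (T₂ \ fromEdgeSet {e}).Reachable v w₂ := by
        by_contra hc
        simp [hs1, hc] at hbeq
      obtain ⟨hφ1, hf1⟩ := h1side hs1
      obtain ⟨hφ2, hf2⟩ := h2side hs2
      have hW1 := (Finset.mem_product.mp hp1S).2
      have hW2 := (Finset.mem_product.mp hp2S).2
      rw [hW, mem_filter] at hW1 hW2
      have hw1u : u ≠ w₁ := fun h => hW1.2.1 h.symm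
      have hw2u : u ≠ w₂ := fun h => hW2.2.1 h.symm
      have hmem1 : s(u,w₁) ∈ T'.edgeSet := by
        rw [← hp1φ, hφ1, swap_edgeSet hw1u]
        exact Or.inr rfl
      have hmem2 : s(u,w₂) ∈ T'.edgeSet := by
        rw [← hp2φ, hφ2, swap_edgeSet hw2u]
        exact Or.inr rfl
      have hdel1 : T' \ fromEdgeSet {s(u,w₁)} = T₁ \ fromEdgeSet {e} := by
        rw [← hp1φ, hφ1, swap_delete_eq hf1]
      have hdel2 : T' \ fromEdgeSet {s(u,w₂)} = T₂ \ fromEdgeSet {e} := by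
        rw [← hp2φ, hφ2, swap_delete_eq hf2]
      have hnr1 : ¬ (T' \ fromEdgeSet {s(u,w₁)}).Reachable u v := by
        rw [hdel1]; exact not_reach_sdiff hac1 hadj1
      have hnr2 : ¬ (T' \ fromEdgeSet {s(u,w₂)}).Reachable u v := by
        rw [hdel2]; exact not_reach_sdiff hac2 hadj2
      have hw1w2 : w₁ = w₂ := unique_cut_nbr hconn' hmem1 hnr1 hmem2 hnr2
      subst hw1w2
      have hT1 : T₁ = (T' \ fromEdgeSet {s(u,w₁)}) ⊔ fromEdgeSet {e} := by
        rw [← hp1φ, hφ1]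
        exact (swap_recover hf1 heT1).symm
      have hT2 : T₂ = (T' \ fromEdgeSet {s(u,w₁)}) ⊔ fromEdgeSet {e} := by
        rw [← hp2φ, hφ2]
        exact (swap_recover hf2 heT2).symm
      rw [Prod.ext_iff]
      exact ⟨hT1.trans hT2.symm, rfl⟩
    · have hs2 : ¬ (T₂ \ fromEdgeSet {e}).Reachable v w₂ := by
        intro hc
        simp only [if_neg hs1, if_pos hc] at hbeq
        exact Bool.noConfusion hbeq
      obtain ⟨hφ1, hf1⟩ := h1nside hs1
      obtain ⟨hφ2, hf2⟩ := h2nside hs2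
      have hW1 := (Finset.mem_product.mp hp1S).2
      have hW2 := (Finset.mem_product.mp hp2S).2
      rw [hW, mem_filter] at hW1 hW2
      have hw1v : v ≠ w₁ := fun h => hW1.2.2.1 h.symm
      have hw2v : v ≠ w₂ := fun h => hW2.2.2.1 h.symm
      have hmem1 : s(v,w₁) ∈ T'.edgeSet := by
        rw [← hp1φ, hφ1, swap_edgeSet hw1v]
        exact Or.inr rfl
      have hmem2 : s(v,w₂) ∈ T'.edgeSet := by
        rw [← hp2φ, hφ2, swap_edgeSet hw2v]
        exact Or.inr rfl
      have hdel1 : T' \ fromEdgeSet {s(v,w₁)} = T₁ \ fromEdgeSet {e} := by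
        rw [← hp1φ, hφ1, swap_delete_eq hf1]
      have hdel2 : T' \ fromEdgeSet {s(v,w₂)} = T₂ \ fromEdgeSet {e} := by
        rw [← hp2φ, hφ2, swap_delete_eq hf2]
      have hnr1 : ¬ (T' \ fromEdgeSet {s(v,w₁)}).Reachable v u := by
        rw [hdel1]; exact fun h => not_reach_sdiff hac1 hadj1 h.symm
      have hnr2 : ¬ (T' \ fromEdgeSet {s(v,w₂)}).Reachable v u := by
        rw [hdel2]; exact fun h => not_reach_sdiff hac2 hadj2 h.symm
      have hw1w2 : w₁ = w₂ := unique_cut_nbr hconn' hmem1 hnr1 hmem2 hnr2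
      subst hw1w2
      have hT1 : T₁ = (T' \ fromEdgeSet {s(v,w₁)}) ⊔ fromEdgeSet {e} := by
        rw [← hp1φ, hφ1]
        exact (swap_recover hf1 heT1).symm
      have hT2 : T₂ = (T' \ fromEdgeSet {s(v,w₁)}) ⊔ fromEdgeSet {e} := by
        rw [← hp2φ, hφ2]
        exact (swap_recover hf2 heT2).symm
      rw [Prod.ext_iff]
      exact ⟨hT1.trans hT2.symm, rfl⟩
  rw [Finset.card_product] at hcard
  exact hcard

lemma arith_step {nr : ℝ} (hn0 : 0 < nr) (x y w : ℕ)
    (h1 : x * w ≤ 2 * y) (h2 : 2 * nr / 3 ≤ (w : ℝ)) :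
    ((x : ℝ) + y) ≤ (1 + 3 / nr) * y := by
  have hx0 : (0:ℝ) ≤ x := Nat.cast_nonneg x
  have hy0 : (0:ℝ) ≤ y := Nat.cast_nonneg y
  have h1R : (x:ℝ) * w ≤ 2 * y := by exact_mod_cast h1
  have h3 : (x:ℝ) * (2 * nr / 3) ≤ 2 * y := le_trans (by nlinarith) h1R
  have h4 : (x:ℝ) ≤ 3 / nr * y := by
    rw [div_mul_eq_mul_div, le_div_iff₀ hn0]
    nlinarith
  nlinarith

open scoped Classical in
/-- If `F` is a union of `t ≤ n/100` pairwise vertex-disjoint edges in `K_n` (`n ≥ 1000`)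
and `T₀` is a forest no edge of which is adjacent to more than `n/12` other edges of `T₀`,
then the number of spanning trees of `K_n` containing `F` and avoiding every edge of
`T₀ \ F` is at least `0.01` times the number of spanning trees containing `F`. -/
theorem count_trees_avoiding_non_star_like (n t : ℕ) (hn : 1000 ≤ n) (ht : 100 * t ≤ n)
    (F : SimpleGraph (Fin n)) [DecidableRel F.Adj]
    (hFdeg : ∀ v : Fin n, F.degree v ≤ 1) (hFedges : F.edgeFinset.card = t)
    (T₀ : SimpleGraph (Fin n)) [DecidableRel T₀.Adj] (hT₀ : T₀.IsAcyclic)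
    (hstar : ∀ e ∈ T₀.edgeFinset,
      (((T₀.edgeFinset.filter (fun f => f ≠ e ∧ ∃ x : Fin n, x ∈ e ∧ x ∈ f)).card : ℝ)
        ≤ (n : ℝ) / 12)) :
    (0.01 : ℝ) *
        (Nat.card {T : SimpleGraph (Fin n) // F ≤ T ∧ T.Connected ∧ T.IsAcyclic} : ℝ)
      ≤ (Nat.card {T : SimpleGraph (Fin n) // F ≤ T ∧ T.Connected ∧ T.IsAcyclic ∧
          ∀ e ∈ T.edgeSet, e ∈ T₀.edgeSet → e ∈ F.edgeSet} : ℝ) := by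
  classical
  have hnR : (1000 : ℝ) ≤ (n : ℝ) := by exact_mod_cast hn
  have hn0 : (0 : ℝ) < (n : ℝ) := by linarith
  set D : Finset (Sym2 (Fin n)) := T₀.edgeFinset \ F.edgeFinset with hD
  set A : Finset (Sym2 (Fin n)) → ℕ := fun P => (univ.filter (fun T : SimpleGraph (Fin n) =>
      F ≤ T ∧ T.Connected ∧ T.IsAcyclic ∧ ∀ d ∈ P, d ∉ T.edgeSet)).card with hA
  clear_value A
  -- degree bound from the not-star-like hypothesis
  have hdeg : ∀ (x : Fin n) (e : Sym2 (Fin n)), e ∈ T₀.edgeFinset → x ∈ e →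
      (T₀.degree x : ℝ) ≤ (n : ℝ) / 12 + 1 := by
    intro x e he hxe
    have hsub2 : (T₀.incidenceFinset x).erase e ⊆
        T₀.edgeFinset.filter (fun f => f ≠ e ∧ ∃ y : Fin n, y ∈ e ∧ y ∈ f) := by
      intro f hf
      rw [Finset.mem_erase, mem_incidenceFinset] at hf
      obtain ⟨hfe, hfE, hxf⟩ := hf
      rw [Finset.mem_filter]
      exact ⟨mem_edgeFinset.mpr hfE, hfe, x, hxe, hxf⟩
    have h1 := Finset.card_le_card hsub2
    rw [Finset.card_erase_of_mem (by
        rw [mem_incidenceFinset]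
        exact ⟨mem_edgeFinset.mp he, hxe⟩),
      card_incidenceFinset_eq_degree] at h1
    have h2 := hstar e he
    have h3 : (T₀.degree x) ≤
        (T₀.edgeFinset.filter (fun f => f ≠ e ∧ ∃ y : Fin n, y ∈ e ∧ y ∈ f)).card + 1 := by
      omega
    calc (T₀.degree x : ℝ) ≤
        ((T₀.edgeFinset.filter (fun f => f ≠ e ∧ ∃ y : Fin n, y ∈ e ∧ y ∈ f)).card : ℝ) + 1 := by
          exact_mod_cast h3
      _ ≤ (n : ℝ) / 12 + 1 := by linarith
  -- the main induction
  have main : ∀ (P : Finset (Sym2 (Fin n))), P ⊆ D →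
      (A ∅ : ℝ) ≤ (1 + 3 / n) ^ P.card * (A P) := by
    intro P
    induction P using Finset.induction_on with
    | empty =>
      intro _
      simp
    | @insert a P ha ih =>
      intro hsub
      have haD : a ∈ D := hsub (Finset.mem_insert_self a P)
      have hPD : P ⊆ D := fun x hx => hsub (Finset.mem_insert_of_mem hx)
      have h1 := ih hPD
      -- decompose a = s(u,v)
      revert ha hsub haD
      induction a using Sym2.ind with
      | _ u v =>
        intro ha hsub haD
        have haT₀ : s(u,v) ∈ T₀.edgeFinset := (Finset.mem_sdiff.mp haD).1
        have haF : s(u,v) ∉ F.edgeSet := by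
          have := (Finset.mem_sdiff.mp haD).2
          rwa [mem_edgeFinset] at this
        have huv : u ≠ v := by
          intro h
          exact T₀.not_isDiag_of_mem_edgeSet (mem_edgeFinset.mp haT₀)
            (by rw [h]; exact Sym2.mk_isDiag_iff.mpr rfl)
        -- the W bound
        set W := univ.filter (fun w : Fin n => w ≠ u ∧ w ≠ v ∧ s(u,w) ∉ P ∧ s(v,w) ∉ P) with hW
        have hWbound : (2 : ℝ) * n / 3 ≤ (W.card : ℝ) := by
          set bad := insert u (insert v (T₀.neighborFinset u ∪ T₀.neighborFinset v)) with hbad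
          have hcover : (univ : Finset (Fin n)) ⊆ W ∪ bad := by
            intro w _
            rw [Finset.mem_union]
            by_cases hwb : w ∈ bad
            · exact Or.inr hwb
            · refine Or.inl ?_
              rw [hW, Finset.mem_filter]
              simp only [hbad, Finset.mem_insert, Finset.mem_union,
                mem_neighborFinset, not_or] at hwb
              obtain ⟨hwu, hwv, hwnu, hwnv⟩ := hwb
              refine ⟨mem_univ _, hwu, hwv, ?_, ?_⟩
              · intro hP
                have := hPD hP
                rw [hD, Finset.mem_sdiff, mem_edgeFinset, mem_edgeSet] at this
                exact hwnu this.1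
              · intro hP
                have := hPD hP
                rw [hD, Finset.mem_sdiff, mem_edgeFinset, mem_edgeSet] at this
                exact hwnv this.1
          have hcard : n ≤ W.card + bad.card := by
            have h2 := Finset.card_le_card hcover
            rw [Finset.card_univ, Fintype.card_fin] at h2
            exact le_trans h2 (Finset.card_union_le _ _)
          have hbadcard : bad.card ≤ 2 + (T₀.degree u + T₀.degree v) := by
            refine le_trans (Finset.card_insert_le _ _) ?_
            have := Finset.card_insert_le v (T₀.neighborFinset u ∪ T₀.neighborFinset v)
            have h4 := Finset.card_union_le (T₀.neighborFinset u) (T₀.neighborFinset v)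
            rw [card_neighborFinset_eq_degree, card_neighborFinset_eq_degree] at h4
            omega
          have hdu := hdeg u s(u,v) haT₀ (Sym2.mem_mk_left u v)
          have hdv := hdeg v s(u,v) haT₀ (Sym2.mem_mk_right u v)
          have hcR : (n : ℝ) ≤ (W.card : ℝ) + (bad.card : ℝ) := by exact_mod_cast hcard
          have hbR : (bad.card : ℝ) ≤ 2 + ((T₀.degree u : ℝ) + (T₀.degree v : ℝ)) := by
            exact_mod_cast hbadcard
          linarith
        -- step count
        have hstep := step_count F T₀ u v huv haF P
        set Xc := (univ.filter (fun T : SimpleGraph (Fin n) =>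
            (F ≤ T ∧ T.Connected ∧ T.IsAcyclic ∧ ∀ d ∈ P, d ∉ T.edgeSet)
              ∧ s(u,v) ∈ T.edgeSet)).card with hXc
        have hstepN : Xc * W.card ≤ 2 * A (insert s(u,v) P) := by
          simp only [hA, hXc, hW]
          exact hstep
        clear_value Xc W
        have hsplit : A P = Xc + A (insert s(u,v) P) := by
          simp only [hA, hXc]
          have h5 : (univ.filter (fun T : SimpleGraph (Fin n) =>
              F ≤ T ∧ T.Connected ∧ T.IsAcyclic ∧ ∀ d ∈ insert s(u,v) P, d ∉ T.edgeSet))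
              = (univ.filter (fun T : SimpleGraph (Fin n) =>
              (F ≤ T ∧ T.Connected ∧ T.IsAcyclic ∧ ∀ d ∈ P, d ∉ T.edgeSet)
                ∧ s(u,v) ∉ T.edgeSet)) := by
            apply Finset.filter_congr
            intro T _
            simp only [Finset.forall_mem_insert]
            tauto
          rw [h5]
          rw [← Finset.card_filter_add_card_filter_not
            (s := univ.filter (fun T : SimpleGraph (Fin n) =>
              F ≤ T ∧ T.Connected ∧ T.IsAcyclic ∧ ∀ d ∈ P, d ∉ T.edgeSet))
            (p := fun T => s(u,v) ∈ T.edgeSet)]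
          rw [Finset.filter_filter, Finset.filter_filter]
        have hstep2 : (A P : ℝ) ≤ (1 + 3 / n) * (A (insert s(u,v) P) : ℝ) := by
          have hAP : (A P : ℝ) = (Xc : ℝ) + (A (insert s(u,v) P) : ℝ) := by
            exact_mod_cast congrArg (Nat.cast : ℕ → ℝ) hsplit
          rw [hAP]
          exact arith_step hn0 _ _ _ hstepN hWbound
        have hpowpos : (0:ℝ) ≤ (1 + 3 / n) ^ P.card := by positivity
        calc (A ∅ : ℝ) ≤ (1 + 3 / n) ^ P.card * (A P) := h1
          _ ≤ (1 + 3 / n) ^ P.card * ((1 + 3 / n) * (A (insert s(u,v) P) : ℝ)) :=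
              mul_le_mul_of_nonneg_left hstep2 hpowpos
          _ = (1 + 3 / n) ^ (insert s(u,v) P).card * (A (insert s(u,v) P) : ℝ) := by
              rw [Finset.card_insert_of_notMem ha, pow_succ]
              ring
  -- conclude
  have hmain := main D (Finset.Subset.refl D)
  have hne : Nonempty (Fin n) := ⟨⟨0, by omega⟩⟩
  have hDcard : D.card + 1 ≤ n := by
    have h6 : D.card ≤ T₀.edgeFinset.card := Finset.card_le_card (Finset.sdiff_subset)
    have h7 := forest_card_edge_le (G := T₀) hT₀
    rw [Fintype.card_fin] at h7
    omega
  have hfac : ((1 : ℝ) + 3 / n) ^ D.card ≤ 100 := by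
    have h8 : ((1 : ℝ) + 3 / n) ≤ Real.exp (3 / n) := by
      have := Real.add_one_le_exp (3 / (n:ℝ))
      linarith
    have h9 : ((1 : ℝ) + 3 / n) ^ D.card ≤ Real.exp (3 / n) ^ D.card :=
      pow_le_pow_left₀ (by positivity) h8 _
    have h10 : Real.exp (3 / (n:ℝ)) ^ D.card = Real.exp ((D.card : ℝ) * (3 / n)) := by
      rw [← Real.exp_nat_mul]
    have hDn : (D.card : ℝ) ≤ n := by exact_mod_cast (by omega : D.card ≤ n)
    have h11 : (D.card : ℝ) * (3 / n) ≤ 3 := by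
      calc (D.card : ℝ) * (3/n) ≤ n * (3/n) := by
            apply mul_le_mul_of_nonneg_right hDn (by positivity)
        _ = 3 := by field_simp
    have h12 : Real.exp ((D.card : ℝ) * (3 / n)) ≤ Real.exp 3 := Real.exp_le_exp.mpr h11
    have h13 : Real.exp 3 < 100 := by
      have he1 := Real.exp_one_lt_d9
      have h14 : Real.exp 3 = Real.exp 1 ^ 3 := by
        rw [show (3:ℝ) = (3:ℕ) * 1 by norm_num, Real.exp_nat_mul]
      rw [h14]
      have h15 : Real.exp 1 ^ 3 < 2.7182818286 ^ 3 :=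
        pow_lt_pow_left₀ he1 (le_of_lt (Real.exp_pos 1)) (by norm_num)
      have h16 : (2.7182818286 : ℝ) ^ 3 < 100 := by norm_num
      linarith
    calc ((1:ℝ) + 3/n)^D.card ≤ Real.exp (3/n) ^ D.card := h9
      _ = Real.exp ((D.card : ℝ) * (3/n)) := h10
      _ ≤ Real.exp 3 := h12
      _ ≤ 100 := le_of_lt h13
  have hcard1 : Nat.card {T : SimpleGraph (Fin n) // F ≤ T ∧ T.Connected ∧ T.IsAcyclic}
      = A ∅ := by
    rw [Nat.card_eq_fintype_card, Fintype.card_subtype, hA]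
    apply Finset.card_bij (fun T _ => T) <;> simp
  have hcard2 : Nat.card {T : SimpleGraph (Fin n) // F ≤ T ∧ T.Connected ∧ T.IsAcyclic ∧
          ∀ e ∈ T.edgeSet, e ∈ T₀.edgeSet → e ∈ F.edgeSet} = A D := by
    rw [Nat.card_eq_fintype_card, Fintype.card_subtype, hA, hD]
    apply Finset.card_bij (fun T _ => T)
    · intro T hT
      simp only [mem_filter, mem_univ, true_and] at hT ⊢
      obtain ⟨h1, h2, h3, h4⟩ := hT
      refine ⟨h1, h2, h3, ?_⟩
      intro d hd hdT
      rw [Finset.mem_sdiff, mem_edgeFinset, mem_edgeFinset] at hd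
      exact hd.2 (h4 d hdT hd.1)
    · intro a ha b hb h; exact h
    · intro T hT
      simp only [mem_filter, mem_univ, true_and] at hT ⊢
      obtain ⟨h1, h2, h3, h4⟩ := hT
      refine ⟨T, ⟨h1, h2, h3, ?_⟩, rfl⟩
      intro e heT heT₀
      by_contra heF
      refine h4 e ?_ heT
      rw [Finset.mem_sdiff, mem_edgeFinset, mem_edgeFinset]
      exact ⟨heT₀, heF⟩
  rw [hcard1, hcard2]
  have hApos : (0:ℝ) ≤ (A D : ℝ) := Nat.cast_nonneg _
  have hfin : (A ∅ : ℝ) ≤ 100 * A D :=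
    le_trans hmain (mul_le_mul_of_nonneg_right hfac hApos)
  norm_num
  linarith
end
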